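/- Let n ≥ 2, ρ = e^{2πi/n}, ν = ⌊n/2⌋. For w = e^{iφ} with π/n < φ < 2π/n and k ∈ {1,…,n}, one has Re(i·w·ρ^{k-1}) < 0 if and only if k ≤ ν. -/

import Mathlib

open Complex

theorem halfplane_arc2 (n : ℕ) (hn : 2 ≤ n) (ν : ℕ) (hν : ν = n / 2)
    (ρ : ℂ) (hρ : ρ = Complex.exp (2 * Real.pi * Complex.I / n))
    (φ : ℝ) (hφ : Real.pi / n < φ) (hφ' : φ < 2 * Real.pi / n)
    (w : ℂ) (hw : w = Complex.exp (Complex.I * φ))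
    (k : ℕ) (hk1 : 1 ≤ k) (hkn : k ≤ n) :
    (Complex.I * w * ρ ^ (k - 1)).re < 0 ↔ k ≤ ν := by
  have hn0 : (0:ℝ) < n := by positivity
  have hπ : (0:ℝ) < Real.pi := Real.pi_pos
  set θ : ℝ := φ + 2 * Real.pi * (k - 1) / n with hθ
  clear_value θ
  have hprod : Complex.I * w * ρ ^ (k - 1) = Complex.I * Complex.exp (θ * Complex.I) := by
    rw [hw, hρ, ← Complex.exp_nat_mul, mul_assoc, ← Complex.exp_add]
    congr 1
    have : ((k - 1 : ℕ) : ℂ) = (k : ℂ) - 1 := by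
      push_cast [Nat.cast_sub hk1]; ring
    rw [this, hθ]
    push_cast
    have hnC : (n : ℂ) ≠ 0 := by exact_mod_cast (by positivity : (0:ℝ) < n).ne'
    field_simp
  rw [hprod, Complex.exp_mul_I]
  have hre : (Complex.I * (Complex.cos θ + Complex.sin θ * Complex.I)).re = -Real.sin θ := by
    simp [Complex.cos_ofReal_re, Complex.sin_ofReal_re]
  rw [hre, neg_lt_zero]
  have hk1R : (1:ℝ) ≤ k := by exact_mod_cast hk1
  have hknR : (k:ℝ) ≤ n := by exact_mod_cast hkn
  constructor
  · intro hs
    by_contra hkν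
    push_neg at hkν
    -- k ≥ ν + 1, so 2k - 1 ≥ n
    have h2k : n + 1 ≤ 2 * k := by omega
    have h2kR : (n:ℝ) + 1 ≤ 2 * k := by exact_mod_cast h2k
    have hθπ : Real.pi ≤ θ - 0 := by
      have h1 : Real.pi ≤ (2 * k - 1) * Real.pi / n := by
        rw [le_div_iff₀ hn0]
        nlinarith
      have h2 : (2 * k - 1) * Real.pi / n = Real.pi / n + 2 * Real.pi * (k - 1) / n := by
        field_simp; ring
      simp only [sub_zero]
      calc Real.pi ≤ Real.pi / n + 2 * Real.pi * (k - 1) / n := by rw [← h2]; exact h1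
        _ ≤ θ := by rw [hθ]; linarith
    simp only [sub_zero] at hθπ
    have hθπ' : Real.pi < θ := by
      have h1 : Real.pi ≤ (2 * k - 1) * Real.pi / n := by
        rw [le_div_iff₀ hn0]; nlinarith
      have : Real.pi / n + 2 * Real.pi * (k - 1) / n < θ := by
        rw [hθ]; linarith
      have h2 : (2 * k - 1) * Real.pi / n = Real.pi / n + 2 * Real.pi * (k - 1) / n := by
        field_simp; ring
      linarith [h2 ▸ h1]
    have hθ2π : θ < 2 * Real.pi := by
      have : θ < 2 * Real.pi * k / n := by
        rw [hθ]
        have : 2 * Real.pi * k / n = 2 * Real.pi / n + 2 * Real.pi * (k - 1) / n := by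
          field_simp; ring
        linarith [this]
      have h2 : 2 * Real.pi * k / n ≤ 2 * Real.pi := by
        rw [div_le_iff₀ hn0]; nlinarith
      linarith
    have : Real.sin θ < 0 := by
      have := Real.sin_pos_of_pos_of_lt_pi (x := θ - Real.pi) (by linarith) (by linarith)
      rw [Real.sin_sub_pi] at this
      linarith
    linarith
  · intro hkν
    have h2k : 2 * k ≤ n := by omega
    have h2kR : 2 * (k:ℝ) ≤ n := by exact_mod_cast h2k
    apply Real.sin_pos_of_pos_of_lt_pi
    · have : 0 < Real.pi / n := by positivity
      have h0 : 0 ≤ 2 * Real.pi * (k - 1) / n := by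
        apply div_nonneg _ hn0.le
        nlinarith
      rw [hθ]; linarith
    · have h1 : θ < 2 * Real.pi * k / n := by
        rw [hθ]
        have : 2 * Real.pi * k / n = 2 * Real.pi / n + 2 * Real.pi * (k - 1) / n := by
          field_simp; ring
        linarith [this]
      have h2 : 2 * Real.pi * k / n ≤ Real.pi := by
        rw [div_le_iff₀ hn0]; nlinarith
      linarith
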